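/- Fix ĉ > 0 and Δ > 0. Suppose (r₁, r₂) and (r₁', r₂') are pairs in (0,1)² with r₁ < r₂ and r₁' < r₂' such that l(r₂) − l(r₁) = Δ = l(r₂') − l(r₁') and l̃(r₂) − l̃(r₁) < l̃(r₂') − l̃(r₁'). Then r₁ < r₁' and r₂ < r₂'. (In particular, the smaller component r₁ of the solution of the system l(r₂) − l(r₁) = (u11 − u10)/ĉ, l̃(r₂) − l̃(r₁) = (u₂ − u10)/ĉ is strictly increasing in u₂.) -/

import Mathlib

/-- `l(r) = 2·log(r/(1−r)) − 1/r + 1/(1−r)`. -/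
noncomputable def l (r : ℝ) : ℝ := 2 * Real.log (r / (1 - r)) - 1 / r + 1 / (1 - r)

/-- `l̃(r) = log(r/(1−r)) + r/(1−r)`. -/
noncomputable def ltilde (r : ℝ) : ℝ := Real.log (r / (1 - r)) + r / (1 - r)

lemma hasDerivAt_logdiv {r : ℝ} (h0 : 0 < r) (h1 : r < 1) :
    HasDerivAt (fun x => Real.log (x / (1 - x))) (1 / (r * (1 - r))) r := by
  have h1' : (0:ℝ) < 1 - r := by linarith
  have hlog : HasDerivAt Real.log r⁻¹ r := Real.hasDerivAt_log h0.ne'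
  have hsub : HasDerivAt (fun x : ℝ => 1 - x) (-1) r := by
    simpa using (hasDerivAt_id' r).const_sub (1:ℝ)
  have hlog2 : HasDerivAt (fun x : ℝ => Real.log (1 - x)) ((1 - r)⁻¹ * (-1)) r :=
    (Real.hasDerivAt_log h1'.ne').comp r hsub
  have h : HasDerivAt (fun x : ℝ => Real.log x - Real.log (1 - x))
      (r⁻¹ - (1 - r)⁻¹ * (-1)) r := hlog.sub hlog2
  have heq : (fun x : ℝ => Real.log x - Real.log (1 - x))
      =ᶠ[nhds r] (fun x => Real.log (x / (1 - x))) := by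
    filter_upwards [Ioo_mem_nhds h0 h1] with x hx
    rw [Real.log_div hx.1.ne' (by linarith [hx.2] : (1:ℝ) - x ≠ 0)]
  have := h.congr_of_eventuallyEq heq.symm
  refine this.congr_deriv ?_
  have hr0 : r ≠ 0 := h0.ne'
  have hr1 : (1:ℝ) - r ≠ 0 := h1'.ne'
  field_simp
  ring

lemma hasDerivAt_l {r : ℝ} (h0 : 0 < r) (h1 : r < 1) :
    HasDerivAt l (1 / (r^2 * (1 - r)^2)) r := by
  have h1' : (0:ℝ) < 1 - r := by linarith
  have hinv : HasDerivAt (fun x : ℝ => 1 / x) (-(1 / r^2)) r := by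
    simpa [one_div] using hasDerivAt_inv h0.ne'
  have hsub : HasDerivAt (fun x : ℝ => 1 - x) (-1) r := by
    simpa using (hasDerivAt_id' r).const_sub (1:ℝ)
  have hinv2 : HasDerivAt (fun x : ℝ => 1 / (1 - x)) (-(1 / (1 - r)^2) * (-1)) r := by
    have : HasDerivAt (fun x : ℝ => 1 / (1 - x)) (-((1-r)^2)⁻¹ * (-1)) r := by
      have hc := (hasDerivAt_inv h1'.ne').comp r hsub
      simpa [one_div, Function.comp_def] using hc
    simpa [one_div] using this
  have h := (((hasDerivAt_logdiv h0 h1).const_mul 2).sub hinv).add hinv2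
  have heq : (fun x : ℝ => 2 * Real.log (x / (1 - x)) - 1 / x + 1 / (1 - x)) = l := rfl
  replace h : HasDerivAt l _ r := h
  convert h using 1
  field_simp
  ring

lemma hasDerivAt_ltilde {r : ℝ} (h0 : 0 < r) (h1 : r < 1) :
    HasDerivAt ltilde (1 / (r * (1 - r)^2)) r := by
  have h1' : (0:ℝ) < 1 - r := by linarith
  have hsub : HasDerivAt (fun x : ℝ => 1 - x) (-1) r := by
    simpa using (hasDerivAt_id' r).const_sub (1:ℝ)
  have hdiv : HasDerivAt (fun x : ℝ => x / (1 - x))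
      ((1 * (1 - r) - r * (-1)) / (1 - r)^2) r :=
    (hasDerivAt_id r).div hsub h1'.ne'
  have h := (hasDerivAt_logdiv h0 h1).add hdiv
  have heq : (fun x : ℝ => Real.log (x / (1 - x)) + x / (1 - x)) = ltilde := rfl
  replace h : HasDerivAt ltilde _ r := h
  convert h using 1
  field_simp
  ring

lemma l_strictMonoOn : StrictMonoOn l (Set.Ioo (0:ℝ) 1) := by
  apply strictMonoOn_of_deriv_pos (convex_Ioo 0 1)
  · intro x hx
    exact (hasDerivAt_l hx.1 hx.2).continuousAt.continuousWithinAt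
  · intro x hx
    rw [interior_Ioo] at hx
    rw [(hasDerivAt_l hx.1 hx.2).deriv]
    have h1x : (0:ℝ) < 1 - x := by linarith [hx.2]
    exact div_pos one_pos (mul_pos (pow_pos hx.1 2) (pow_pos h1x 2))

/-- Lower bound: `a * (l b - l a) ≤ ltilde b - ltilde a`. -/
lemma l_lower {a b : ℝ} (h0 : 0 < a) (hab : a ≤ b) (hb : b < 1) :
    a * (l b - l a) ≤ ltilde b - ltilde a := by
  set g : ℝ → ℝ := fun r => ltilde r - a * l r with hg
  have key : ∀ x ∈ Set.Icc a b, HasDerivAt g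
      (1 / (x * (1 - x)^2) - a * (1 / (x^2 * (1 - x)^2))) x := by
    intro x hx
    have hx0 : 0 < x := lt_of_lt_of_le h0 hx.1
    have hx1 : x < 1 := lt_of_le_of_lt hx.2 hb
    exact (hasDerivAt_ltilde hx0 hx1).sub ((hasDerivAt_l hx0 hx1).const_mul a)
  have mono : MonotoneOn g (Set.Icc a b) := by
    apply monotoneOn_of_deriv_nonneg (convex_Icc a b)
    · intro x hx
      exact (key x hx).continuousAt.continuousWithinAt
    · intro x hx
      rw [interior_Icc] at hx
      exact ((key x (Set.mem_Icc_of_Ioo hx)).differentiableAt).differentiableWithinAt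
    · intro x hx
      rw [interior_Icc] at hx
      have hx' : x ∈ Set.Icc a b := Set.mem_Icc_of_Ioo hx
      rw [(key x hx').deriv]
      have hx0 : 0 < x := lt_of_lt_of_le h0 hx'.1
      have hx1 : (0:ℝ) < 1 - x := by linarith [lt_of_le_of_lt hx'.2 hb]
      have : 1 / (x * (1 - x)^2) - a * (1 / (x^2 * (1 - x)^2))
          = (x - a) / (x^2 * (1 - x)^2) := by field_simp
      rw [this]
      apply div_nonneg (by linarith [hx'.1]) (by positivity)
  have := mono (Set.left_mem_Icc.2 hab) (Set.right_mem_Icc.2 hab) hab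
  simp only [hg] at this
  linarith
/-- Upper bound: `ltilde b - ltilde a ≤ b * (l b - l a)`. -/
lemma l_upper {a b : ℝ} (h0 : 0 < a) (hab : a ≤ b) (hb : b < 1) :
    ltilde b - ltilde a ≤ b * (l b - l a) := by
  set g : ℝ → ℝ := fun r => ltilde r - b * l r with hg
  have key : ∀ x ∈ Set.Icc a b, HasDerivAt g
      (1 / (x * (1 - x)^2) - b * (1 / (x^2 * (1 - x)^2))) x := by
    intro x hx
    have hx0 : 0 < x := lt_of_lt_of_le h0 hx.1
    have hx1 : x < 1 := lt_of_le_of_lt hx.2 hb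
    exact (hasDerivAt_ltilde hx0 hx1).sub ((hasDerivAt_l hx0 hx1).const_mul b)
  have anti : AntitoneOn g (Set.Icc a b) := by
    apply antitoneOn_of_deriv_nonpos (convex_Icc a b)
    · intro x hx
      exact (key x hx).continuousAt.continuousWithinAt
    · intro x hx
      rw [interior_Icc] at hx
      exact ((key x (Set.mem_Icc_of_Ioo hx)).differentiableAt).differentiableWithinAt
    · intro x hx
      rw [interior_Icc] at hx
      have hx' : x ∈ Set.Icc a b := Set.mem_Icc_of_Ioo hx
      rw [(key x hx').deriv]
      have hx0 : 0 < x := lt_of_lt_of_le h0 hx'.1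
      have hx1 : (0:ℝ) < 1 - x := by linarith [lt_of_le_of_lt hx'.2 hb]
      have : 1 / (x * (1 - x)^2) - b * (1 / (x^2 * (1 - x)^2))
          = (x - b) / (x^2 * (1 - x)^2) := by field_simp
      rw [this]
      apply div_nonpos_of_nonpos_of_nonneg (by linarith [hx'.2]) (by positivity)
  have := anti (Set.left_mem_Icc.2 hab) (Set.right_mem_Icc.2 hab) hab
  simp only [hg] at this
  linarith

theorem stmt_8 (Δ r₁ r₂ r₁' r₂' : ℝ) (hΔ : 0 < Δ)
    (hr₁ : r₁ ∈ Set.Ioo (0 : ℝ) 1) (hr₂ : r₂ ∈ Set.Ioo (0 : ℝ) 1)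
    (hr₁' : r₁' ∈ Set.Ioo (0 : ℝ) 1) (hr₂' : r₂' ∈ Set.Ioo (0 : ℝ) 1)
    (h12 : r₁ < r₂) (h12' : r₁' < r₂')
    (hl : l r₂ - l r₁ = Δ) (hl' : l r₂' - l r₁' = Δ)
    (hlt : ltilde r₂ - ltilde r₁ < ltilde r₂' - ltilde r₁') :
    r₁ < r₁' ∧ r₂ < r₂' := by
  have key1 : r₁ < r₁' := by
    by_contra h
    push_neg at h  -- r₁' ≤ r₁
    have hle : l r₁' ≤ l r₁ := (l_strictMonoOn.monotoneOn) hr₁' hr₁ h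
    have hle2 : l r₂' ≤ l r₂ := by linarith
    have hr22 : r₂' ≤ r₂ := by
      by_contra h2
      push_neg at h2
      exact absurd (l_strictMonoOn hr₂ hr₂' h2) (not_lt.2 hle2)
    rcases le_or_gt r₁ r₂' with hcase | hcase
    · -- nested case
      have hA : r₂' * (l r₂ - l r₂') ≤ ltilde r₂ - ltilde r₂' :=
        l_lower hr₂'.1 hr22 hr₂.2
      have hB : ltilde r₁ - ltilde r₁' ≤ r₁ * (l r₁ - l r₁') :=
        l_upper hr₁'.1 h hr₁.2
      have hD : l r₂ - l r₂' = l r₁ - l r₁' := by linarith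
      nlinarith [hr₂'.1, hr₁.1]
    · -- disjoint case: r₁' < r₂' < r₁ < r₂
      have hA : ltilde r₂' - ltilde r₁' ≤ r₂' * (l r₂' - l r₁') :=
        l_upper hr₁'.1 h12'.le hr₂'.2
      have hB : r₁ * (l r₂ - l r₁) ≤ ltilde r₂ - ltilde r₁ :=
        l_lower hr₁.1 h12.le hr₂.2
      rw [hl'] at hA
      rw [hl] at hB
      nlinarith [mul_lt_mul_of_pos_right hcase hΔ]
  refine ⟨key1, ?_⟩
  have : l r₁ < l r₁' := l_strictMonoOn hr₁ hr₁' key1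
  have h2 : l r₂ < l r₂' := by linarith
  by_contra h
  push_neg at h
  exact absurd ((l_strictMonoOn.monotoneOn) hr₂' hr₂ h) (not_le.2 h2)
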